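/- Let Q : ℝ^n → ℝ be the quadratic polynomial Q(x) = N·x + xᵀMx, where N ∈ ℝ^n has all coordinates negative and |N_i| ≥ |N_j| whenever i ≤ j, and M ∈ ℝ^{n×n}. Define M₀ = max over pairs i ≤ j of max((M_{ij}+M_{ji})/(-N_i), 0). If M₀ > 0, then for every x with all coordinates nonnegative, x ≠ 0, and ∑_i x_i < 1/M₀, we have Q(x) < 0. -/

import Mathlib

open Finset

theorem quadratic_negative_on_small_simplex
    {n : ℕ} [NeZero n] (N : Fin n → ℝ) (M : Matrix (Fin n) (Fin n) ℝ)
    (hN : ∀ i, N i < 0)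
    (hord : ∀ i j : Fin n, i ≤ j → |N j| ≤ |N i|)
    (M0 : ℝ)
    (hM0 : M0 = Finset.univ.sup' Finset.univ_nonempty
      (fun p : Fin n × Fin n =>
        if p.1 ≤ p.2 then max ((M p.1 p.2 + M p.2 p.1) / (-N p.1)) 0 else 0))
    (hM0pos : 0 < M0)
    (x : Fin n → ℝ) (hx : ∀ i, 0 ≤ x i) (hx0 : x ≠ 0)
    (hsum : ∑ i, x i < 1 / M0) :
    (∑ i, N i * x i) + ∑ i, ∑ j, x i * M i j * x j < 0 := by
  set S := ∑ i, x i with hS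
  -- A = ∑ (-N i) x i > 0
  have hA : 0 < ∑ i, (-N i) * x i := by
    obtain ⟨i, hi⟩ : ∃ i, 0 < x i := by
      by_contra h
      push_neg at h
      exact hx0 (funext fun i => le_antisymm (h i) (hx i))
    refine Finset.sum_pos' (fun j _ => mul_nonneg (by linarith [hN j]) (hx j))
      ⟨i, mem_univ i, mul_pos (by linarith [hN i]) hi⟩
  -- key bound
  have key : ∀ i j : Fin n, M i j + M j i ≤ M0 * (-N i + -N j) := by
    have hle : ∀ a b : Fin n, a ≤ b → M a b + M b a ≤ M0 * (-N a) := by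
      intro a b hab
      have h1 : max ((M a b + M b a) / (-N a)) 0 ≤ M0 := by
        rw [hM0]
        have := Finset.le_sup'
          (f := fun p : Fin n × Fin n =>
            if p.1 ≤ p.2 then max ((M p.1 p.2 + M p.2 p.1) / (-N p.1)) 0 else 0)
          (b := (a, b)) (mem_univ _)
        exact le_trans (le_of_eq (by simp [hab])) this
      have h2 : (M a b + M b a) / (-N a) ≤ M0 := le_trans (le_max_left _ _) h1
      have hNa : 0 < -N a := by linarith [hN a]
      exact (div_le_iff₀ hNa).mp h2
    intro i j
    rcases le_total i j with h | h
    · have := hle i j h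
      nlinarith [hN j, hM0pos]
    · have := hle j i h
      nlinarith [hN i, hM0pos]
  -- bound the quadratic part
  have hquad : 2 * (∑ i, ∑ j, x i * M i j * x j)
      ≤ 2 * (M0 * ((∑ i, (-N i) * x i) * S)) := by
    have e1 : 2 * (∑ i, ∑ j, x i * M i j * x j)
        = ∑ i, ∑ j, (M i j + M j i) * (x i * x j) := by
      have swap : (∑ i, ∑ j, M j i * (x i * x j))
          = ∑ i, ∑ j, M i j * (x i * x j) := by
        rw [Finset.sum_comm]
        apply Finset.sum_congr rfl; intro i _
        apply Finset.sum_congr rfl; intro j _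
        ring
      calc 2 * (∑ i, ∑ j, x i * M i j * x j)
          = (∑ i, ∑ j, M i j * (x i * x j)) + ∑ i, ∑ j, M j i * (x i * x j) := by
            rw [swap]; rw [two_mul]; congr 1 <;>
              (apply Finset.sum_congr rfl; intro i _;
               apply Finset.sum_congr rfl; intro j _; ring)
        _ = ∑ i, ∑ j, (M i j + M j i) * (x i * x j) := by
            rw [← Finset.sum_add_distrib]
            apply Finset.sum_congr rfl; intro i _
            rw [← Finset.sum_add_distrib]
            apply Finset.sum_congr rfl; intro j _
            ring
    have e2 : ∑ i, ∑ j, (M0 * (-N i + -N j)) * (x i * x j)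
        = 2 * (M0 * ((∑ i, (-N i) * x i) * S)) := by
      have t1 := Finset.sum_mul_sum (univ : Finset (Fin n)) univ
        (fun i => M0 * (-N i) * x i) x
      have t2 := Finset.sum_mul_sum (univ : Finset (Fin n)) univ
        x (fun j => M0 * (-N j) * x j)
      have hpull : ∑ i, M0 * (-N i) * x i = M0 * ∑ i, (-N i) * x i := by
        rw [Finset.mul_sum]
        exact Finset.sum_congr rfl fun i _ => by ring
      have split : ∑ i, ∑ j, (M0 * (-N i + -N j)) * (x i * x j)
          = (∑ i, ∑ j, (M0 * (-N i) * x i) * x j)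
            + ∑ i, ∑ j, x i * (M0 * (-N j) * x j) := by
        rw [← Finset.sum_add_distrib]
        refine Finset.sum_congr rfl fun i _ => ?_
        rw [← Finset.sum_add_distrib]
        exact Finset.sum_congr rfl fun j _ => by ring
      rw [split, ← t1, ← t2, hpull, hS]
      ring
    rw [e1, ← e2]
    apply Finset.sum_le_sum; intro i _
    apply Finset.sum_le_sum; intro j _
    exact mul_le_mul_of_nonneg_right (key i j) (mul_nonneg (hx i) (hx j))
  have hNeg : (∑ i, N i * x i) = -(∑ i, (-N i) * x i) := by
    rw [← Finset.sum_neg_distrib]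
    apply Finset.sum_congr rfl; intro i _; ring
  have hMS : M0 * S < 1 := by
    rw [lt_div_iff₀ hM0pos] at hsum
    linarith
  have hSnn : 0 ≤ S := Finset.sum_nonneg fun i _ => hx i
  rw [hNeg]
  nlinarith [mul_pos hA (sub_pos.mpr hMS)]
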